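/- arXiv:1704.08799 — 2 statements merged into one kernel-verified Lean document; each statement's English description precedes it below -/
import Mathlib

section
/- Let A be a tensor of order m and dimension n with characteristic polynomial φ_A(λ) = Σ_{d=0}^{D} a_d λ^{D−d}. Then the cyclic index c(A) equals gcd{d : a_d ≠ 0} and also equals gcd{d : Tr_d(A) ≠ 0}, where Tr_d(A) is the sum of d-th powers of all eigenvalues. -/
open BigOperators

/-- An order-`m`, dimension-`n` real tensor (hypermatrix). -/
abbrev Tensor (m n : ℕ) : Type := (Fin m → Fin n) → ℝ

/-- The primitive rotation `e^{i·2π/k}` of the complex plane. -/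
noncomputable def rot (k : ℕ) : ℂ := Complex.exp (2 * (Real.pi : ℂ) * Complex.I / (k : ℂ))

/-- A tensor is nonnegative if all its entries are nonnegative. -/
def Tensor.Nonneg {m n : ℕ} (A : Tensor m n) : Prop := ∀ α, 0 ≤ A α

/-- A tensor is symmetric if its entries are invariant under permutations of indices. -/
def Tensor.Symm {m n : ℕ} (A : Tensor m n) : Prop :=
  ∀ (σ : Equiv.Perm (Fin m)) (α : Fin m → Fin n), A (α ∘ σ) = A α

/-- Arc `(i,j)` of the digraph associated to `A`: some entry `a_{i i₂ … i_m} ≠ 0`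
with `j` among the later indices. -/
def Tensor.Arc {m n : ℕ} [NeZero m] (A : Tensor m n) (i j : Fin n) : Prop :=
  ∃ α : Fin m → Fin n, A α ≠ 0 ∧ α 0 = i ∧ ∃ k : Fin m, k ≠ 0 ∧ α k = j

/-- `A` is weakly irreducible if its associated digraph is strongly connected. -/
def Tensor.WeaklyIrreducible {m n : ℕ} [NeZero m] (A : Tensor m n) : Prop :=
  ∀ i j : Fin n, Relation.ReflTransGen A.Arc i j

/-- The eigenvalue equations `(A x^{m-1})_i = λ x_i^{m-1}` for all `i`. -/
def Tensor.EigEq {m n : ℕ} [NeZero m] (A : Tensor m n) (lam : ℂ) (x : Fin n → ℂ) : Prop :=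
  ∀ i : Fin n,
    (∑ α : Fin m → Fin n,
      if α 0 = i then (A α : ℂ) * ∏ k ∈ Finset.univ.erase (0 : Fin m), x (α k) else 0)
    = lam * x i ^ (m - 1)

/-- `lam` is an eigenvalue of the tensor `A`. -/
def Tensor.IsEig {m n : ℕ} [NeZero m] (A : Tensor m n) (lam : ℂ) : Prop :=
  ∃ x : Fin n → ℂ, x ≠ 0 ∧ A.EigEq lam x

/-- `A` is spectral `ℓ`-symmetric: its spectrum is invariant under rotation by `e^{i2π/ℓ}`. -/
def Tensor.SpectralSym {m n : ℕ} [NeZero m] (ℓ : ℕ) (A : Tensor m n) : Prop :=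
  ∀ lam : ℂ, A.IsEig lam ↔ A.IsEig (rot ℓ * lam)

/-- `A = e^{-iθ} D^{-(m-1)} A D` for the diagonal matrix `D = diag d`, entrywise. -/
def Tensor.DiagSim {m n : ℕ} [NeZero m] (A : Tensor m n) (θ : ℝ) (d : Fin n → ℂ) : Prop :=
  ∀ α : Fin m → Fin n,
    (A α : ℂ) = Complex.exp (-(θ : ℂ) * Complex.I) * d (α 0) ^ (-((m : ℤ) - 1)) * (A α : ℂ) *
      ∏ k ∈ Finset.univ.erase (0 : Fin m), d (α k)

/-- The set `𝔇^{(j)}` of normalized unimodular diagonal matrices `D` with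
`A = e^{-i2πj/ℓ} D^{-(m-1)} A D`. -/
def Tensor.DSet {m n : ℕ} [NeZero m] [NeZero n] (A : Tensor m n) (ℓ j : ℕ) :
    Set (Fin n → ℂ) :=
  {d | d 0 = 1 ∧ (∀ i, ‖d i‖ = 1) ∧ A.DiagSim (2 * Real.pi * j / ℓ) d}

/-- The set `𝔇 = ⋃_{j=0}^{ℓ-1} 𝔇^{(j)}`. -/
def Tensor.DFull {m n : ℕ} [NeZero m] [NeZero n] (A : Tensor m n) (ℓ : ℕ) :
    Set (Fin n → ℂ) :=
  ⋃ j ∈ Finset.range ℓ, A.DSet ℓ j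

/-- An `m`-uniform hypergraph on vertex set `Fin n`. -/
structure TensorHypergraph (m n : ℕ) where
  edges : Finset (Finset (Fin n))
  uniform : ∀ e ∈ edges, e.card = m

/-- The adjacency tensor of an `m`-uniform hypergraph. -/
noncomputable def TensorHypergraph.adjTensor {m n : ℕ} (G : TensorHypergraph m n) : Tensor m n :=
  fun α => if Finset.image α Finset.univ ∈ G.edges then (1 : ℝ) / (m - 1).factorial else 0

/-- A hypergraph is connected if every two vertices are joined by a walk. -/
def TensorHypergraph.Connected {m n : ℕ} (G : TensorHypergraph m n) : Prop :=
  ∀ i j : Fin n, Relation.ReflTransGen (fun u v => ∃ e ∈ G.edges, u ∈ e ∧ v ∈ e) i j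


section Stmt16Aux

lemma rot_pow_nat (k d : ℕ) : rot k ^ d = Complex.exp (2 * (Real.pi:ℂ) * Complex.I * d / k) := by
  rw [rot, ← Complex.exp_nat_mul]
  ring_nf

lemma rot_pow_eq_one_iff {k : ℕ} (hk : 0 < k) (d : ℕ) : rot k ^ d = 1 ↔ k ∣ d := by
  have hkc : (k : ℂ) ≠ 0 := Nat.cast_ne_zero.mpr hk.ne'
  have h2 : (2 * (Real.pi:ℂ) * Complex.I) ≠ 0 := by
    simp [Real.pi_ne_zero, Complex.I_ne_zero]
  rw [rot_pow_nat, Complex.exp_eq_one_iff]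
  constructor
  · rintro ⟨n, hn⟩
    have hdc : (d : ℂ) = n * k := by
      field_simp at hn
      apply mul_left_cancel₀ h2
      linear_combination (2 * (Real.pi:ℂ) * Complex.I) * hn
    have hdz : (d : ℤ) = n * k := by exact_mod_cast hdc
    exact Int.ofNat_dvd.mp ⟨n, by rw [hdz]; ring⟩
  · rintro ⟨t, rfl⟩
    exact ⟨t, by field_simp; push_cast; ring⟩

lemma esymm_map_mul (ω : ℂ) (R : Multiset ℂ) (k : ℕ) :
    (R.map (fun r => ω * r)).esymm k = ω ^ k * R.esymm k := by
  have := Multiset.pow_smul_esymm ω k R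
  simpa [smul_eq_mul] using this.symm

lemma esymm_eq_zero_of_card_lt {R : Multiset ℂ} {k : ℕ} (h : Multiset.card R < k) :
    R.esymm k = 0 := by
  rw [Multiset.esymm, Multiset.powersetCard_eq_empty _ h]
  simp

open Finset MvPolynomial in
lemma newton_multiset (R : Multiset ℂ) (k : ℕ) :
    (k : ℂ) * R.esymm k = (-1) ^ (k + 1) *
      ∑ a ∈ (antidiagonal k).filter (fun a => a.1 < k),
        (-1) ^ a.1 * R.esymm a.1 * (R.map (fun r => r ^ a.2)).sum := by
  classical
  obtain ⟨l, rfl⟩ : ∃ l : List ℂ, (l : Multiset ℂ) = R := ⟨R.toList, R.coe_toList⟩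
  set σ := Fin l.length
  set f : σ → ℂ := l.get
  have hRf : Multiset.map f Finset.univ.val = (l : Multiset ℂ) := by
    have h0 : (Finset.univ.val : Multiset σ) = (List.finRange l.length : List σ) := by
      simp [Finset.univ, Fintype.elems]
    rw [h0, Multiset.map_coe]
    exact congrArg _ (by rw [← List.ofFn_eq_map]; exact List.ofFn_get l)
  have hN := congrArg (MvPolynomial.aeval f) (MvPolynomial.mul_esymm_eq_sum σ ℂ k)
  simp only [map_mul, map_natCast, map_pow, map_neg, map_one, map_sum,
    MvPolynomial.aeval_esymm_eq_multiset_esymm, hRf] at hN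
  convert hN using 3 with a ha
  rw [MvPolynomial.psum, map_sum]
  simp only [map_pow, MvPolynomial.aeval_X]
  rw [← hRf, Multiset.map_map]
  rw [Finset.sum_eq_multiset_sum]
  rfl

open Polynomial in
lemma invar_of_esymm (R : Multiset ℂ) {e : ℕ} (he : 0 < e)
    (h : ∀ d : ℕ, 0 < d → R.esymm d ≠ 0 → e ∣ d) :
    R.map (fun r => rot e * r) = R := by
  classical
  set D := Multiset.card R with hD
  have hrot : ∀ d : ℕ, e ∣ d → rot e ^ d = 1 := fun d hd => (rot_pow_eq_one_iff he d).mpr hd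
  have hcard : Multiset.card (R.map (fun r => rot e * r)) = D := by simp [hD]
  have key : ((R.map (fun r => rot e * r)).map (fun a => X - C a)).prod
      = (R.map (fun a => X - C a)).prod := by
    ext j
    rcases le_or_gt j D with hj | hj
    · rw [Multiset.prod_X_sub_C_coeff _ (by rw [hcard]; exact hj),
        Multiset.prod_X_sub_C_coeff _ (by rw [← hD]; exact hj), hcard, ← hD]
      congr 1
      rw [esymm_map_mul]
      rcases Nat.eq_zero_or_pos (D - j) with h0 | hpos
      · simp [h0]
      rcases eq_or_ne (R.esymm (D - j)) 0 with hz | hz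
      · simp [hz]
      · rw [hrot _ (h _ hpos hz), one_mul]
    · rw [Polynomial.coeff_eq_zero_of_natDegree_lt, Polynomial.coeff_eq_zero_of_natDegree_lt]
      · rw [Polynomial.natDegree_multiset_prod_X_sub_C_eq_card]; exact hj
      · rw [Polynomial.natDegree_multiset_prod_X_sub_C_eq_card, hcard]; exact hj
  have h2 := congrArg Polynomial.roots key
  rwa [Polynomial.roots_multiset_prod_X_sub_C, Polynomial.roots_multiset_prod_X_sub_C] at h2

lemma invar_mul {R : Multiset ℂ} {ω₁ ω₂ : ℂ} (h₁ : R.map (fun r => ω₁ * r) = R)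
    (h₂ : R.map (fun r => ω₂ * r) = R) : R.map (fun r => ω₁ * ω₂ * r) = R := by
  calc R.map (fun r => ω₁ * ω₂ * r) = (R.map (fun r => ω₂ * r)).map (fun r => ω₁ * r) := by
        rw [Multiset.map_map]; exact Multiset.map_congr rfl (fun x _ => (mul_assoc _ _ _))
    _ = R := by rw [h₂, h₁]

lemma invar_pow {R : Multiset ℂ} {ω : ℂ} (h : R.map (fun r => ω * r) = R) (n : ℕ) :
    R.map (fun r => ω ^ n * r) = R := by
  induction n with
  | zero => simpa using Multiset.map_congr rfl (fun x _ => one_mul x)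
  | succ n ih => simpa [pow_succ, mul_comm (ω ^ n) ω] using invar_mul h ih

lemma zpow_reduce {ω : ℂ} {t : ℕ} (ht : 0 < t) (hω : ω ^ t = 1) (a : ℤ) :
    ω ^ a = ω ^ (a % t).toNat := by
  have hω0 : ω ≠ 0 := by
    intro h0; rw [h0, zero_pow ht.ne'] at hω; exact zero_ne_one hω
  have htz : (t : ℤ) ≠ 0 := by exact_mod_cast ht.ne'
  have hmod : a = (t : ℤ) * (a / t) + a % t := (Int.mul_ediv_add_emod a t).symm
  have h1 : ω ^ a = ω ^ ((t:ℤ) * (a / t)) * ω ^ (a % t) := by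
    rw [← zpow_add₀ hω0, ← hmod]
  have h2 : ω ^ ((t:ℤ) * (a / t)) = 1 := by
    rw [zpow_mul, zpow_natCast, hω, one_zpow]
  have h3 : ω ^ (a % t) = ω ^ (a % t).toNat := by
    rw [← zpow_natCast, Int.toNat_of_nonneg (Int.emod_nonneg a htz)]
  rw [h1, h2, one_mul, h3]

lemma rot_lcm_eq {j k : ℕ} (hj : 0 < j) (hk : 0 < k) :
    rot (Nat.lcm j k) = rot k ^ (Nat.gcdA j k) * rot j ^ (Nat.gcdB j k) := by
  set a := Nat.gcdA j k
  set b := Nat.gcdB j k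
  set g := Nat.gcd j k with hg
  set L := Nat.lcm j k with hL
  have hj0 : (j : ℂ) ≠ 0 := Nat.cast_ne_zero.mpr hj.ne'
  have hk0 : (k : ℂ) ≠ 0 := Nat.cast_ne_zero.mpr hk.ne'
  have hLpos : 0 < L := Nat.pos_of_ne_zero (Nat.lcm_ne_zero hj.ne' hk.ne')
  have hL0 : (L : ℂ) ≠ 0 := Nat.cast_ne_zero.mpr hLpos.ne'
  have hC1 : (g : ℂ) * L = j * k := by
    exact_mod_cast congrArg (Nat.cast : ℕ → ℂ) (Nat.gcd_mul_lcm j k)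
  have hC2 : (g : ℂ) = j * (a : ℂ) + k * (b : ℂ) := by
    exact_mod_cast congrArg (Int.cast : ℤ → ℂ) (Nat.gcd_eq_gcd_ab j k)
  have hexp : 2 * (Real.pi:ℂ) * Complex.I / L
      = (a:ℂ) * (2 * (Real.pi:ℂ) * Complex.I / k) + (b:ℂ) * (2 * (Real.pi:ℂ) * Complex.I / j) := by
    field_simp
    linear_combination (L:ℂ) * hC2 - hC1
  rw [rot, hexp, Complex.exp_add, Complex.exp_int_mul, Complex.exp_int_mul]
  rfl

end Stmt16Aux

/-- with `χ` the characteristic polynomial of `A` (monic, degree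
`D = n(m-1)^{n-1}`, roots = eigenvalues, at least one nonzero), the cyclic index `c`
(the greatest `k` such that the spectrum is invariant under rotation by `e^{i2π/k}`)
equals `gcd{d : a_d ≠ 0}` and also `gcd{d : Tr_d(A) ≠ 0}`; the gcds are expressed by
their universal property. -/
theorem stmt16 {m n c : ℕ} [NeZero m] [NeZero n] (A : Tensor m n)
    (χ : Polynomial ℂ) (hmon : χ.Monic)
    (hdeg : χ.natDegree = n * (m - 1) ^ (n - 1))
    (hroots : ∀ lam : ℂ, lam ∈ χ.roots ↔ A.IsEig lam)
    (hnz : ∃ z ∈ χ.roots, z ≠ 0)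
    (hc : IsGreatest {k : ℕ | 0 < k ∧ χ.roots.map (fun z => rot k * z) = χ.roots} c) :
    ((∀ d : ℕ, 0 < d → d ≤ χ.natDegree → χ.coeff (χ.natDegree - d) ≠ 0 → c ∣ d) ∧
      (∀ e : ℕ, (∀ d : ℕ, 0 < d → d ≤ χ.natDegree → χ.coeff (χ.natDegree - d) ≠ 0 → e ∣ d)
        → e ∣ c)) ∧
    ((∀ d : ℕ, 0 < d → (χ.roots.map (fun z => z ^ d)).sum ≠ 0 → c ∣ d) ∧
      (∀ e : ℕ, (∀ d : ℕ, 0 < d → (χ.roots.map (fun z => z ^ d)).sum ≠ 0 → e ∣ d)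
        → e ∣ c)) := by
  classical
  set D := χ.natDegree with hDdef
  set R := χ.roots with hRdef
  have hsplits : χ.Splits := IsAlgClosed.splits χ
  have hcard : Multiset.card R = D := (Polynomial.splits_iff_card_roots).mp hsplits
  have hcoeff : ∀ d : ℕ, d ≤ D → χ.coeff (D - d) = (-1)^d * R.esymm d := by
    intro d hd
    have h0 := Polynomial.coeff_eq_esymm_roots_of_card (p := χ) hcard (k := D - d) (Nat.sub_le _ _)
    rw [h0, hmon.leadingCoeff, one_mul, Nat.sub_sub_self hd]
  have hcpos : 0 < c := hc.1.1
  have hcinv : R.map (fun z => rot c * z) = R := hc.1.2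
  -- elementary symmetric functions detect divisibility by c
  have hEforward : ∀ d : ℕ, R.esymm d ≠ 0 → c ∣ d := by
    intro d hne
    have h1 : rot c ^ d * R.esymm d = R.esymm d := by
      rw [← esymm_map_mul, hcinv]
    have h2 : rot c ^ d = 1 := mul_right_cancel₀ hne (h1.trans (one_mul _).symm)
    exact (rot_pow_eq_one_iff hcpos d).mp h2
  -- key backward lemma: any common divisor of the coefficient support divides c
  have key : ∀ e : ℕ, (∀ d : ℕ, 0 < d → d ≤ D → χ.coeff (D - d) ≠ 0 → e ∣ d) → e ∣ c := by
    intro e hcoe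
    have hE : ∀ d : ℕ, 0 < d → R.esymm d ≠ 0 → e ∣ d := by
      intro d hd hne
      rcases le_or_gt d D with hdD | hdD
      · refine hcoe d hd hdD ?_
        rw [hcoeff d hdD]
        exact mul_ne_zero (pow_ne_zero _ (neg_ne_zero.mpr one_ne_zero)) hne
      · exact absurd (esymm_eq_zero_of_card_lt (hcard ▸ hdD)) hne
    rcases Nat.eq_zero_or_pos e with rfl | hepos
    · exfalso
      obtain ⟨z, hz, hzne⟩ := hnz
      have hXD : χ = Polynomial.X ^ D := by
        ext j
        rcases lt_trichotomy j D with hj | rfl | hj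
        · rw [Polynomial.coeff_X_pow, if_neg hj.ne]
          have hd : 0 < D - j := Nat.sub_pos_of_lt hj
          have hE0 : R.esymm (D - j) = 0 := by
            by_contra hne0
            exact absurd (hE (D - j) hd hne0) (by omega)
          have hj' : j = D - (D - j) := by omega
          rw [hj', hcoeff _ (Nat.sub_le _ _), hE0, mul_zero]
        · rw [Polynomial.coeff_X_pow, if_pos rfl]
          exact hmon.coeff_natDegree
        · rw [Polynomial.coeff_X_pow, if_neg hj.ne', Polynomial.coeff_eq_zero_of_natDegree_lt hj]
      have hzr : χ.eval z = 0 := Polynomial.isRoot_of_mem_roots hz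
      rw [hXD] at hzr
      simp only [Polynomial.eval_pow, Polynomial.eval_X] at hzr
      exact hzne (pow_eq_zero_iff'.mp hzr).1
    · have hinvE : R.map (fun z => rot e * z) = R := invar_of_esymm R hepos hE
      set L := Nat.lcm e c with hLdef
      have hLpos : 0 < L := Nat.pos_of_ne_zero (Nat.lcm_ne_zero hepos.ne' hcpos.ne')
      have hinvL : R.map (fun z => rot L * z) = R := by
        rw [rot_lcm_eq hepos hcpos]
        have h1 : R.map (fun z => rot c ^ (Nat.gcdA e c) * z) = R := by
          rw [zpow_reduce hcpos ((rot_pow_eq_one_iff hcpos c).mpr dvd_rfl)]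
          exact invar_pow hcinv _
        have h2 : R.map (fun z => rot e ^ (Nat.gcdB e c) * z) = R := by
          rw [zpow_reduce hepos ((rot_pow_eq_one_iff hepos e).mpr dvd_rfl)]
          exact invar_pow hinvE _
        exact invar_mul h1 h2
      have hLc : L ≤ c := hc.2 ⟨hLpos, hinvL⟩
      have hcL : c ≤ L := Nat.le_of_dvd hLpos (Nat.dvd_lcm_right e c)
      have hLeq : L = c := le_antisymm hLc hcL
      exact hLeq ▸ Nat.dvd_lcm_left e c
  refine ⟨⟨?_, fun e he => key e he⟩, ⟨?_, ?_⟩⟩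
  · -- coefficient forward
    intro d hd hdD hne
    apply hEforward d
    intro h0
    rw [hcoeff d hdD, h0, mul_zero] at hne
    exact hne rfl
  · -- power sum forward
    intro d hd hne
    have h1 : rot c ^ d * (R.map (fun z => z ^ d)).sum = (R.map (fun z => z ^ d)).sum := by
      calc rot c ^ d * (R.map (fun z => z ^ d)).sum
          = (R.map (fun z => rot c ^ d * z ^ d)).sum := (Multiset.sum_map_mul_left).symm
        _ = ((R.map (fun z => rot c * z)).map (fun z => z ^ d)).sum := by
            rw [Multiset.map_map]
            exact congrArg _ (Multiset.map_congr rfl (fun x _ => (mul_pow _ _ _).symm))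
        _ = (R.map (fun z => z ^ d)).sum := by rw [hcinv]
    have h2 : rot c ^ d = 1 := mul_right_cancel₀ hne (h1.trans (one_mul _).symm)
    exact (rot_pow_eq_one_iff hcpos d).mp h2
  · -- power sum backward
    intro e hpe
    have hEzero : ∀ d : ℕ, 0 < d → ¬ e ∣ d → R.esymm d = 0 := by
      intro d
      induction d using Nat.strong_induction_on with
      | _ d IH =>
        intro hd hnd
        have hnewton := newton_multiset R d
        have hsum0 : ∑ a ∈ (Finset.HasAntidiagonal.antidiagonal d).filter (fun a => a.1 < d),
            (-1 : ℂ) ^ a.1 * R.esymm a.1 * (R.map (fun r => r ^ a.2)).sum = 0 := by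
          refine Finset.sum_eq_zero ?_
          intro x hx
          obtain ⟨hx1, hx2⟩ := Finset.mem_filter.mp hx
          have hxsum : x.1 + x.2 = d := Finset.HasAntidiagonal.mem_antidiagonal.mp hx1
          rcases eq_or_ne ((R.map (fun r => r ^ x.2)).sum) 0 with hP | hP
          · rw [hP, mul_zero]
          have heb : e ∣ x.2 := hpe x.2 (by omega) hP
          rcases eq_or_ne (R.esymm x.1) 0 with hEa | hEa
          · rw [hEa, mul_zero, zero_mul]
          have hea : e ∣ x.1 := by
            rcases Nat.eq_zero_or_pos x.1 with h0 | hpos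
            · rw [h0]; exact dvd_zero e
            · by_contra hcon
              exact hEa (IH x.1 hx2 hpos hcon)
          exact absurd (hxsum ▸ Nat.dvd_add hea heb) hnd
        rw [hsum0, mul_zero] at hnewton
        rcases mul_eq_zero.mp hnewton with h0 | h0
        · exact absurd h0 (Nat.cast_ne_zero.mpr hd.ne')
        · exact h0
    refine key e ?_
    intro d hd hdD hcne
    have hne : R.esymm d ≠ 0 := by
      intro h0
      rw [hcoeff d hdD, h0, mul_zero] at hcne
      exact hcne rfl
    by_contra hnd
    exact hne (hEzero d hd hnd)
end

section
/- Let G be an m-uniform hypergraph whose vertex set admits a bipartition V = V1 ∪ V2 such that every edge intersects V1 in exactly p vertices (G is p-hm bipartite). Then G is spectral m/gcd(p,m)-symmetric. -/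
open BigOperators

/-- An `m`-uniform hypergraph on vertex set `Fin n`. -/
structure UHypergraph (m n : ℕ) where
  edges : Finset (Finset (Fin n))
  uniform : ∀ e ∈ edges, e.card = m

/-- The adjacency tensor of an `m`-uniform hypergraph. -/
noncomputable def UHypergraph.adjTensor {m n : ℕ} (G : UHypergraph m n) : Tensor m n :=
  fun α => if Finset.image α Finset.univ ∈ G.edges then (1 : ℝ) / (m - 1).factorial else 0

/-- A hypergraph is connected if every two vertices are joined by a walk. -/
def UHypergraph.Connected {m n : ℕ} (G : UHypergraph m n) : Prop :=
  ∀ i j : Fin n, Relation.ReflTransGen (fun u v => ∃ e ∈ G.edges, u ∈ e ∧ v ∈ e) i j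


lemma eig_shift {m n p : ℕ} [NeZero m] [NeZero n] (G : UHypergraph m n)
    (V1 : Finset (Fin n)) (hp : ∀ e ∈ G.edges, (e ∩ V1).card = p)
    (w : ℂ) (hw : w ^ m = 1) (lam : ℂ) (h : G.adjTensor.IsEig lam) :
    G.adjTensor.IsEig (w ^ p * lam) := by
  classical
  obtain ⟨x, hx0, hex⟩ := h
  have hm : 0 < m := Nat.pos_of_ne_zero (NeZero.ne m)
  have hw0 : w ≠ 0 := by
    intro h0
    rw [h0, zero_pow (NeZero.ne m)] at hw
    exact zero_ne_one hw
  set d : Fin n → ℂ := fun i => if i ∈ V1 then w else 1 with hd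
  have hd0 : ∀ i, d i ≠ 0 := fun i => by by_cases h : i ∈ V1 <;> simp [hd, h, hw0]
  have hdm : ∀ i, d i ^ m = 1 := fun i => by by_cases h : i ∈ V1 <;> simp [hd, h, hw]
  have hdinv : ∀ i, d i ^ (m - 1) = (d i)⁻¹ := by
    intro i
    have h1 : d i ^ (m - 1) * d i = 1 := by
      rw [← pow_succ, Nat.sub_add_cancel hm, hdm]
    exact eq_inv_of_mul_eq_one_left h1
  refine ⟨fun i => d i * x i, ?_, ?_⟩
  · obtain ⟨i, hi⟩ := Function.ne_iff.mp hx0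
    intro hcontra
    have := congrFun hcontra i
    simp only [Pi.zero_apply, mul_eq_zero] at this
    rcases this with h1 | h1
    · exact hd0 i h1
    · exact hi h1
  · intro i
    have key : ∀ α : Fin m → Fin n,
        (if α 0 = i then (G.adjTensor α : ℂ) *
            ∏ k ∈ Finset.univ.erase (0 : Fin m), (d (α k) * x (α k)) else 0)
        = w ^ p * (d i)⁻¹ *
          (if α 0 = i then (G.adjTensor α : ℂ) *
            ∏ k ∈ Finset.univ.erase (0 : Fin m), x (α k) else 0) := by
      intro α
      by_cases hα : α 0 = i
      · rw [if_pos hα, if_pos hα]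
        by_cases he : Finset.image α Finset.univ ∈ G.edges
        · have hinj : ∀ a ∈ (Finset.univ : Finset (Fin m)), ∀ b ∈ Finset.univ,
              α a = α b → a = b := by
            have hcard : (Finset.image α Finset.univ).card = (Finset.univ : Finset (Fin m)).card := by
              rw [G.uniform _ he, Finset.card_univ, Fintype.card_fin]
            intro a ha b hb hab
            exact Finset.injOn_of_card_image_eq hcard ha hb hab
          have hprodd : ∏ k, d (α k) = w ^ p := by
            rw [← Finset.prod_image hinj]
            have h1 : ∏ v ∈ Finset.image α Finset.univ, d v
                = ∏ v ∈ Finset.image α Finset.univ ∩ V1, w := by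
              rw [hd]
              rw [Finset.prod_ite_mem]
            rw [h1, Finset.prod_const, hp _ he]
          have hsplit : d (α 0) * ∏ k ∈ Finset.univ.erase (0 : Fin m), d (α k) = w ^ p := by
            rw [Finset.mul_prod_erase Finset.univ (fun k => d (α k)) (Finset.mem_univ 0)]
            exact hprodd
          have hP : ∏ k ∈ Finset.univ.erase (0 : Fin m), d (α k) = w ^ p * (d i)⁻¹ := by
            rw [hα] at hsplit
            field_simp
            rw [eq_div_iff (hd0 i), mul_comm]
            exact hsplit
          rw [Finset.prod_mul_distrib, hP]
          ring
        · have h0 : G.adjTensor α = 0 := by simp [UHypergraph.adjTensor, he]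
          simp [h0]
      · rw [if_neg hα, if_neg hα, mul_zero]
    calc (∑ α : Fin m → Fin n,
          if α 0 = i then (G.adjTensor α : ℂ) *
            ∏ k ∈ Finset.univ.erase (0 : Fin m), (fun j => d j * x j) (α k) else 0)
        = ∑ α : Fin m → Fin n, w ^ p * (d i)⁻¹ *
          (if α 0 = i then (G.adjTensor α : ℂ) *
            ∏ k ∈ Finset.univ.erase (0 : Fin m), x (α k) else 0) := by
          exact Finset.sum_congr rfl fun α _ => key α
      _ = w ^ p * (d i)⁻¹ * (lam * x i ^ (m - 1)) := by
          rw [← Finset.mul_sum, hex i]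
      _ = (w ^ p * lam) * ((fun j => d j * x j) i) ^ (m - 1) := by
          simp only
          rw [mul_pow, hdinv]
          ring

/-- an `m`-uniform `p`-hm bipartite hypergraph (every edge meets `V₁` in
exactly `p` vertices) is spectral `m/gcd(p,m)`-symmetric. -/
theorem stmt19 {m n p : ℕ} [NeZero m] [NeZero n] (hm : 0 < m) (G : UHypergraph m n)
    (V1 : Finset (Fin n)) (hp : ∀ e ∈ G.edges, (e ∩ V1).card = p) :
    (G.adjTensor).SpectralSym (m / Nat.gcd p m) := by
  classical
  have hgpos : 0 < Nat.gcd p m := Nat.gcd_pos_of_pos_right p hm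
  have hgdvd : Nat.gcd p m ∣ m := Nat.gcd_dvd_right p m
  set g := Nat.gcd p m with hgdef
  set L := m / g with hLdef
  have hLg : L * g = m := Nat.div_mul_cancel hgdvd
  have hLpos : 0 < L := Nat.div_pos (Nat.le_of_dvd hm hgdvd) hgpos
  set u : ℤ := Nat.gcdA p m with hudef
  set v : ℤ := Nat.gcdB p m with hvdef
  have hbez : (g : ℤ) = p * u + m * v := Nat.gcd_eq_gcd_ab p m
  set w : ℂ := Complex.exp (2 * Real.pi * Complex.I * u / m) with hwdef
  have hmC : (m : ℂ) ≠ 0 := Nat.cast_ne_zero.mpr hm.ne'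
  have hgC : (g : ℂ) ≠ 0 := Nat.cast_ne_zero.mpr hgpos.ne'
  have hLC : (L : ℂ) ≠ 0 := Nat.cast_ne_zero.mpr hLpos.ne'
  have hLgC : (L : ℂ) * (g : ℂ) = (m : ℂ) := by exact_mod_cast hLg
  have hwm : w ^ m = 1 := by
    rw [hwdef, ← Complex.exp_nat_mul]
    rw [show (m : ℂ) * (2 * Real.pi * Complex.I * u / m) = u * (2 * Real.pi * Complex.I) by
      field_simp]
    exact Complex.exp_int_mul_two_pi_mul_I u
  have hwp : w ^ p = rot L := by
    have hpu : (p : ℂ) * u = g - m * v := by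
      have h1 : (g : ℂ) = p * u + m * v := by exact_mod_cast hbez
      linear_combination -h1
    have e3 : (g : ℂ) / m = 1 / L := by
      rw [div_eq_div_iff hmC hLC]
      linear_combination hLgC
    rw [hwdef, ← Complex.exp_nat_mul, rot]
    rw [show (p : ℂ) * (2 * Real.pi * Complex.I * u / m)
        = 2 * Real.pi * Complex.I * ((g : ℂ) / m) + ((-v : ℤ) : ℂ) * (2 * Real.pi * Complex.I) from by
      push_cast
      field_simp
      linear_combination hpu]
    rw [e3, Complex.exp_add, Complex.exp_int_mul_two_pi_mul_I, mul_one, mul_one_div]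
  intro lam
  constructor
  · intro h
    have h2 := eig_shift G V1 hp w hwm lam h
    rwa [hwp] at h2
  · intro h
    have hwinvm : w⁻¹ ^ m = 1 := by rw [inv_pow, hwm, inv_one]
    have h2 := eig_shift G V1 hp w⁻¹ hwinvm _ h
    have hwpne : w ^ p ≠ 0 := pow_ne_zero _ (by rw [hwdef]; exact Complex.exp_ne_zero _)
    rw [inv_pow, ← hwp] at h2
    rwa [show (w ^ p)⁻¹ * (w ^ p * lam) = lam from by field_simp] at h2
end
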